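/- Let R be a thrice-differentiable self-concordant barrier function on the interior of a compact convex set K ⊂ ℝⁿ with diameter Δ (i.e., R(x) tends to infinity as x approaches the boundary of K, and for every x in int K and direction h, the function t ↦ R(x+th) satisfies |f'''(0)| ≤ 2 f''(0)^{3/2}). Then for every x in int K, every eigenvalue of the Hessian ∇²R(x) is at least 1/Δ². -/

import Mathlib

open Filter


lemma rpow_three_halves_eq {x : ℝ} (hx : 0 ≤ x) :
    x ^ ((3:ℝ)/2) = Real.sqrt x ^ 3 := by
  rw [show (3:ℝ)/2 = (1/2) * 3 by norm_num, Real.rpow_mul hx, Real.sqrt_eq_rpow,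
    ← Real.rpow_natCast (x ^ ((1:ℝ)/2)) 3]
  norm_num

lemma aux_convexity {p d A : ℝ} (hp : 0 ≤ p) (hd : 0 < d) (hA : p + d ≤ A) :
    2 * (p + d) ^ ((3:ℝ)/2) ≤ 2 * p ^ ((3:ℝ)/2) + 3 * Real.sqrt A * d := by
  have hpd : (0:ℝ) ≤ p + d := by linarith
  rw [rpow_three_halves_eq hp, rpow_three_halves_eq hpd]
  set a := Real.sqrt p with ha
  set q := Real.sqrt (p + d) with hq
  have ha0 : 0 ≤ a := Real.sqrt_nonneg _
  have hq0 : 0 ≤ q := Real.sqrt_nonneg _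
  have ha2 : a ^ 2 = p := Real.sq_sqrt hp
  have hq2 : q ^ 2 = p + d := Real.sq_sqrt hpd
  have hqA : q ≤ Real.sqrt A := Real.sqrt_le_sqrt hA
  have hA0 : 0 ≤ Real.sqrt A := Real.sqrt_nonneg _
  -- 2 q^3 ≤ 2 a^3 + 3 q (q^2 - a^2) since (q-a)^2 (q+2a) ≥ 0
  have key : 2 * q ^ 3 ≤ 2 * a ^ 3 + 3 * q * (q^2 - a^2) := by nlinarith [sq_nonneg (q - a), sq_nonneg (q + a)]
  have : 3 * q * (q^2 - a^2) ≤ 3 * Real.sqrt A * d := by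
    rw [ha2, hq2]
    have : p + d - p = d := by ring
    rw [this]
    nlinarith
  linarith

open Set Filter Topology in
lemma comparison_lemma {g g' : ℝ → ℝ} {b s : ℝ} (hb : 0 < b) (hbs : b < s)
    (hg : ∀ t ∈ Set.Ico (0:ℝ) b, HasDerivAt g (g' t) t)
    (hSC : ∀ t ∈ Set.Ico (0:ℝ) b, g' t ≤ 2 * (g t) ^ ((3:ℝ)/2))
    (h0 : g 0 < (s^2)⁻¹) :
    ∀ t ∈ Set.Ico (0:ℝ) b, g t ≤ ((s - b)^2)⁻¹ + 1 := by
  have hsb : 0 < s - b := by linarith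
  set A : ℝ := ((s - b)^2)⁻¹ + 1 with hA
  have hA0 : 0 < A := by positivity
  set L : ℝ := 3 * Real.sqrt A + 1 with hL
  have hL0 : 0 < L := by positivity
  set ε : ℝ := Real.exp (-L * b) with hε
  have hε0 : 0 < ε := Real.exp_pos _
  set ψ : ℝ → ℝ := fun t => ((s - t)^2)⁻¹ + ε * Real.exp (L * t) with hψ
  set ψ' : ℝ → ℝ := fun t => 2 * (s - t) / ((s - t)^2)^2 + ε * (Real.exp (L * t) * L) with hψ'
  have hψd : ∀ t : ℝ, t ≠ s → HasDerivAt ψ (ψ' t) t := by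
    intro t ht
    have h1 : HasDerivAt (fun t : ℝ => s - t) (-1) t := (hasDerivAt_id t).const_sub s
    have h2 := h1.pow 2
    have h3 := h2.inv (pow_ne_zero 2 (sub_ne_zero.mpr (Ne.symm ht)))
    have h4 : HasDerivAt (fun t : ℝ => L * t) L t := by
      simpa using (hasDerivAt_id t).const_mul L
    have h5 := (h4.exp).const_mul ε
    convert h3.add h5 using 1
    · rfl
    · rfl
    · rfl
    · simp [hψ']
  -- bounds on ψ on [0, b)
  have hψbound : ∀ t ∈ Set.Ico (0:ℝ) b, ((s - t)^2)⁻¹ ≤ ((s - b)^2)⁻¹ ∧ ε * Real.exp (L * t) ≤ 1 := by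
    intro t ht
    constructor
    · apply inv_anti₀ (by positivity)
      apply pow_le_pow_left₀ hsb.le (by linarith [ht.2])
    · rw [hε, ← Real.exp_add]
      apply Real.exp_le_one_iff.mpr
      nlinarith [ht.2, hL0]
  -- key claim
  have key : ∀ t ∈ Set.Ico (0:ℝ) b, g t < ψ t := by
    by_contra hcon
    push_neg at hcon
    obtain ⟨t₀, ht₀, ht₀'⟩ := hcon
    set Bad : Set ℝ := {t | t ∈ Set.Ico (0:ℝ) b ∧ ψ t ≤ g t} with hBad
    have hne : Bad.Nonempty := ⟨t₀, ht₀, ht₀'⟩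
    have hbdd : BddBelow Bad := ⟨0, fun τ hτ => hτ.1.1⟩
    set c : ℝ := sInf Bad with hc
    have hc0 : 0 ≤ c := le_csInf hne (fun τ hτ => hτ.1.1)
    have hcb : c < b := lt_of_le_of_lt (csInf_le hbdd ⟨ht₀, ht₀'⟩) ht₀.2
    have hcIco : c ∈ Set.Ico (0:ℝ) b := ⟨hc0, hcb⟩
    have hcs : c ≠ s := by intro h; rw [h] at hcb; linarith
    have hgc : ContinuousAt g c := (hg c hcIco).continuousAt
    have hψc : ContinuousAt ψ c := (hψd c hcs).continuousAt
    -- c ∈ Bad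
    have hmem : ψ c ≤ g c := by
      by_contra hlt
      push_neg at hlt
      have hev := hgc.eventually_lt hψc hlt
      rw [Metric.eventually_nhds_iff] at hev
      obtain ⟨δ, hδ0, hδ⟩ := hev
      have : c + δ ≤ c := by
        refine le_csInf hne (fun τ hτ => ?_)
        by_contra hτδ
        push_neg at hτδ
        have hτc : c ≤ τ := csInf_le hbdd hτ
        have : dist τ c < δ := by rw [Real.dist_eq, abs_lt]; constructor <;> linarith
        exact absurd hτ.2 (not_le.mpr (hδ this))
      linarith
    have hcpos : 0 < c := by
      rcases hc0.lt_or_eq with h | h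
      · exact h
      · exfalso
        have : ψ 0 ≤ g 0 := by rw [← h] at hmem; exact hmem
        have hψ0 : ψ 0 = (s^2)⁻¹ + ε := by simp [hψ]
        rw [hψ0] at this
        linarith
    have hbefore : ∀ t, 0 ≤ t → t < c → g t < ψ t := by
      intro t ht0 htc
      by_contra hge
      push_neg at hge
      have : c ≤ t := csInf_le hbdd ⟨⟨ht0, htc.trans hcb⟩, hge⟩
      linarith
    -- equality at c
    have heq : g c = ψ c := by
      refine le_antisymm ?_ hmem
      have hNe : (𝓝[Set.Ioo (0:ℝ) c] c).NeBot := by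
        refine mem_closure_iff_nhdsWithin_neBot.mp ?_
        rw [closure_Ioo hcpos.ne]
        exact ⟨hcpos.le, le_refl c⟩
      have htend : Tendsto (fun t => g t - ψ t) (𝓝[Set.Ioo (0:ℝ) c] c) (𝓝 (g c - ψ c)) :=
        ((hgc.sub hψc).tendsto).mono_left nhdsWithin_le_nhds
      have hevle : ∀ᶠ t in 𝓝[Set.Ioo (0:ℝ) c] c, g t - ψ t ≤ 0 :=
        eventually_nhdsWithin_of_forall (fun t ht => by linarith [hbefore t ht.1.le ht.2])
      have := le_of_tendsto htend hevle
      linarith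
    -- derivative of w := g - ψ at c is nonneg
    have hw : HasDerivAt (fun t => g t - ψ t) (g' c - ψ' c) c := (hg c hcIco).sub (hψd c hcs)
    have hdnn : 0 ≤ g' c - ψ' c := by
      have hslope := hasDerivAt_iff_tendsto_slope.mp hw
      have hmono : 𝓝[Set.Ioo (0:ℝ) c] c ≤ 𝓝[≠] c :=
        nhdsWithin_mono c (fun t ht => ne_of_lt ht.2)
      have hNe : (𝓝[Set.Ioo (0:ℝ) c] c).NeBot := by
        refine mem_closure_iff_nhdsWithin_neBot.mp ?_
        rw [closure_Ioo hcpos.ne]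
        exact ⟨hcpos.le, le_refl c⟩
      refine ge_of_tendsto (hslope.mono_left hmono) ?_
      refine eventually_nhdsWithin_of_forall (fun t ht => ?_)
      have hwt : g t - ψ t < 0 := by linarith [hbefore t ht.1.le ht.2]
      have hwc : g c - ψ c = 0 := by rw [heq]; ring
      rw [slope_def_field]
      rw [div_nonneg_iff]
      right
      constructor
      · rw [hwc]; linarith
      · linarith [ht.2]
    -- strict inequality on derivative: contradiction
    set p : ℝ := ((s - c)^2)⁻¹ with hp
    set d : ℝ := ε * Real.exp (L * c) with hd
    have hsc : 0 < s - c := by linarith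
    have hp0 : 0 ≤ p := by positivity
    have hd0 : 0 < d := by positivity
    have hpd : p + d ≤ A := by
      obtain ⟨h1, h2⟩ := hψbound c hcIco
      rw [hA]; linarith
    have hgψ : g c = p + d := heq
    have hder : g' c ≤ 2 * p ^ ((3:ℝ)/2) + 3 * Real.sqrt A * d := by
      calc g' c ≤ 2 * (g c) ^ ((3:ℝ)/2) := hSC c hcIco
        _ = 2 * (p + d) ^ ((3:ℝ)/2) := by rw [hgψ]
        _ ≤ 2 * p ^ ((3:ℝ)/2) + 3 * Real.sqrt A * d := aux_convexity hp0 hd0 hpd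
    have hψ'c : ψ' c = 2 * p ^ ((3:ℝ)/2) + L * d := by
      have h1 : p ^ ((3:ℝ)/2) = ((s - c)⁻¹) ^ 3 := by
        rw [rpow_three_halves_eq hp0, hp, Real.sqrt_inv, Real.sqrt_sq hsc.le]
      rw [hψ', h1, hd]
      field_simp
    have : g' c - ψ' c < 0 := by
      rw [hψ'c]
      have : 3 * Real.sqrt A * d < L * d := by
        apply mul_lt_mul_of_pos_right _ hd0
        rw [hL]; linarith
      linarith
    linarith
  intro t ht
  obtain ⟨h1, h2⟩ := hψbound t ht
  have hk : g t < ((s - t)^2)⁻¹ + ε * Real.exp (L * t) := key t ht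
  rw [hA]
  linarith

open Set Filter Topology in
lemma decrease_lemma {v v' : ℝ → ℝ} {b : ℝ}
    (hv : ∀ t ∈ Set.Ico (0:ℝ) b, HasDerivAt v (v' t) t)
    (hv' : ∀ t ∈ Set.Ico (0:ℝ) b, v' t ≤ 0) :
    ∀ t ∈ Set.Ico (0:ℝ) b, v t ≤ v 0 := by
  intro t ht
  have hsub : Set.Icc (0:ℝ) t ⊆ Set.Ico (0:ℝ) b := fun τ hτ =>
    ⟨hτ.1, lt_of_le_of_lt hτ.2 ht.2⟩
  have hanti : AntitoneOn v (Set.Icc (0:ℝ) t) := by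
    apply antitoneOn_of_deriv_nonpos (convex_Icc 0 t)
    · exact fun τ hτ => (hv τ (hsub hτ)).continuousAt.continuousWithinAt
    · intro τ hτ
      rw [interior_Icc] at hτ
      exact ((hv τ (hsub ⟨hτ.1.le, hτ.2.le⟩)).differentiableAt).differentiableWithinAt
    · intro τ hτ
      rw [interior_Icc] at hτ
      rw [(hv τ (hsub ⟨hτ.1.le, hτ.2.le⟩)).deriv]
      exact hv' τ (hsub ⟨hτ.1.le, hτ.2.le⟩)
  exact hanti (Set.left_mem_Icc.mpr ht.1) ⟨ht.1, le_refl t⟩ ht.1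

open Set Topology in
/-- Eigenvalue lower bound for the Hessian of a self-concordant barrier:
for every `x ∈ int K` and unit direction `u`, the second derivative of
`t ↦ R (x + t • u)` at `0` (the quadratic form of the Hessian at `u`) is
at least `1 / Δ²`, where `Δ = diam K`. -/
theorem hessian_eigenvalue_lower_bound
    {n : ℕ} (K : Set (EuclideanSpace ℝ (Fin n)))
    (hKcomp : IsCompact K) (hKconv : Convex ℝ K)
    (R : EuclideanSpace ℝ (Fin n) → ℝ)
    (hsmooth : ContDiffOn ℝ 3 R (interior K))
    (hbarrier : ∀ y ∈ frontier K,
      Tendsto R (nhdsWithin y (interior K)) atTop)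
    (hSC : ∀ x ∈ interior K, ∀ h : EuclideanSpace ℝ (Fin n),
      |iteratedDeriv 3 (fun t : ℝ => R (x + t • h)) 0| ≤
        2 * (iteratedDeriv 2 (fun t : ℝ => R (x + t • h)) 0) ^ ((3 : ℝ) / 2)) :
    ∀ x ∈ interior K, ∀ u : EuclideanSpace ℝ (Fin n), ‖u‖ = 1 →
      1 / (Metric.diam K) ^ 2 ≤ iteratedDeriv 2 (fun t : ℝ => R (x + t • u)) 0 := by
  intro x hx u hu
  by_contra hcon
  push_neg at hcon
  set Δ : ℝ := Metric.diam K with hΔdef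
  set f : ℝ → ℝ := fun t : ℝ => R (x + t • u) with hfdef
  set S : Set ℝ := {t : ℝ | x + t • u ∈ interior K} with hSdef
  have hlc : Continuous (fun t : ℝ => x + t • u) := by continuity
  have hSopen : IsOpen S := isOpen_interior.preimage hlc
  have h0S : (0:ℝ) ∈ S := by simp [hSdef, hx]
  have hSne : S.Nonempty := ⟨0, h0S⟩
  have hSconv : Convex ℝ S := by
    intro t1 h1 t2 h2 a c ha hc hac
    show x + (a • t1 + c • t2) • u ∈ interior K
    have hrw : x + (a • t1 + c • t2) • u = a • (x + t1 • u) + c • (x + t2 • u) := by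
      match_scalars <;> simp <;> linarith
    rw [hrw]
    exact (hKconv.interior) h1 h2 ha hc hac
  have hdist : ∀ t : ℝ, dist (x + t • u) x = |t| := by
    intro t
    rw [dist_eq_norm, add_sub_cancel_left, norm_smul, hu, mul_one, Real.norm_eq_abs]
  have hSle : ∀ t ∈ S, t ≤ Δ := by
    intro t ht
    calc t ≤ |t| := le_abs_self t
      _ = dist (x + t • u) x := (hdist t).symm
      _ ≤ Δ := Metric.dist_le_diam_of_mem hKcomp.isBounded (interior_subset ht)
          (interior_subset hx)
  have hbdd : BddAbove S := ⟨Δ, fun t ht => hSle t ht⟩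
  set b : ℝ := sSup S with hbdef
  have hb0 : 0 < b := by
    obtain ⟨δ, hδ0, hδ⟩ := Metric.isOpen_iff.mp hSopen 0 h0S
    have : δ/2 ∈ S := hδ (by
      rw [Metric.mem_ball, Real.dist_eq, sub_zero, abs_of_pos (half_pos hδ0)]; linarith)
    calc (0:ℝ) < δ/2 := half_pos hδ0
      _ ≤ b := le_csSup hbdd this
  have hbΔ : b ≤ Δ := csSup_le hSne hSle
  have hΔ0 : 0 < Δ := lt_of_lt_of_le hb0 hbΔ
  have hIco : ∀ t ∈ Set.Ico (0:ℝ) b, t ∈ S := by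
    intro t ht
    obtain ⟨t', ht'S, htt'⟩ := exists_lt_of_lt_csSup hSne ht.2
    exact hSconv.ordConnected.out h0S ht'S ⟨ht.1, htt'.le⟩
  have hbnotin : x + b • u ∉ interior K := by
    intro h
    obtain ⟨δ, hδ0, hδ⟩ := Metric.isOpen_iff.mp hSopen b h
    have : b + δ/2 ∈ S := hδ (by
      rw [Metric.mem_ball, Real.dist_eq, show b + δ/2 - b = δ/2 by ring,
        abs_of_pos (half_pos hδ0)]; linarith)
    linarith [le_csSup hbdd this]
  have hNeB : (𝓝[Set.Ioo (0:ℝ) b] b).NeBot := by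
    refine mem_closure_iff_nhdsWithin_neBot.mp ?_
    rw [closure_Ioo hb0.ne]
    exact ⟨hb0.le, le_refl b⟩
  have htendl : Tendsto (fun t : ℝ => x + t • u) (𝓝[Set.Ioo (0:ℝ) b] b) (𝓝 (x + b • u)) :=
    (hlc.continuousAt).tendsto.mono_left nhdsWithin_le_nhds
  have hfront : x + b • u ∈ frontier K := by
    have hclos : x + b • u ∈ closure K := mem_closure_of_tendsto htendl
      (eventually_nhdsWithin_of_forall
        (fun t ht => interior_subset (hIco t ⟨ht.1.le, ht.2⟩)))
    exact ⟨hclos, hbnotin⟩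
  -- smoothness along the line
  have hlCD : ContDiff ℝ 3 (fun t : ℝ => x + t • u) :=
    contDiff_const.add (contDiff_id.smul contDiff_const)
  have hfCD : ContDiffOn ℝ 3 f S := hsmooth.comp hlCD.contDiffOn (fun t ht => ht)
  have hf1 : ContDiffOn ℝ 2 (deriv f) S := hfCD.deriv_of_isOpen hSopen (by norm_num)
  have hf2 : ContDiffOn ℝ 1 (deriv (deriv f)) S := hf1.deriv_of_isOpen hSopen (by norm_num)
  set g : ℝ → ℝ := deriv (deriv f) with hgdef
  have hiter2 : iteratedDeriv 2 f = g := by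
    have h2 : (2:ℕ) = 1 + 1 := rfl
    rw [hgdef, h2, iteratedDeriv_succ, iteratedDeriv_one]
  have hiter3 : iteratedDeriv 3 f = deriv g := by
    have h3 : (3:ℕ) = 2 + 1 := rfl
    rw [h3, iteratedDeriv_succ, hiter2]
  have hgD : ∀ t ∈ Set.Ico (0:ℝ) b, HasDerivAt g (deriv g t) t := fun t ht =>
    ((hf2.differentiableOn (by norm_num)).differentiableAt
      (hSopen.mem_nhds (hIco t ht))).hasDerivAt
  have hSCline : ∀ t ∈ Set.Ico (0:ℝ) b, deriv g t ≤ 2 * (g t) ^ ((3:ℝ)/2) := by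
    intro t ht
    have htS := hIco t ht
    have h := hSC (x + t • u) htS u
    have hfun : (fun s : ℝ => R (x + t • u + s • u)) = fun s : ℝ => f (t + s) := by
      funext s
      rw [hfdef]
      congr 1
      rw [add_smul]
      abel
    rw [hfun] at h
    have hshift : ∀ m : ℕ, iteratedDeriv m (fun s : ℝ => f (t + s)) 0 = iteratedDeriv m f t := by
      intro m
      rw [iteratedDeriv_comp_const_add]
      simp
    rw [hshift 3, hshift 2, hiter2, hiter3] at h
    exact le_trans (le_abs_self _) h
  -- choice of s
  have hg0 : g 0 < 1 / Δ^2 := by rw [← hiter2]; exact hcon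
  obtain ⟨s, hbs, hs⟩ : ∃ s : ℝ, b < s ∧ g 0 < (s^2)⁻¹ := by
    by_cases hsign : g 0 ≤ 0
    · exact ⟨b + 1, by linarith, lt_of_le_of_lt hsign (by positivity)⟩
    · push_neg at hsign
      set q : ℝ := Real.sqrt (g 0) with hq
      have hq0 : 0 < q := Real.sqrt_pos.mpr hsign
      have hq2 : q^2 = g 0 := Real.sq_sqrt hsign.le
      have hqΔ : q * Δ < 1 := by
        have h1 : g 0 * Δ^2 < 1 := (lt_div_iff₀ (by positivity)).mp hg0
        nlinarith [sq_nonneg (q * Δ - 1), mul_pos hq0 hΔ0]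
      set r : ℝ := q⁻¹ with hr
      have hqr : q * r = 1 := mul_inv_cancel₀ hq0.ne'
      have hbr : b < r := by nlinarith
      refine ⟨(b + r)/2, by linarith, ?_⟩
      have hs0 : 0 < (b + r)/2 := by linarith
      have hqs : q * ((b + r)/2) < 1 := by nlinarith
      have : g 0 * ((b + r)/2)^2 < 1 := by nlinarith [mul_pos hq0 hs0, hq2, hqs]
      rw [← one_div]
      exact (lt_div_iff₀ (by positivity)).mpr this
  -- comparison
  have hgbound := comparison_lemma hb0 hbs hgD hSCline hs
  set A : ℝ := ((s - b)^2)⁻¹ + 1 with hAdef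
  have hA0 : 0 < A := by positivity
  -- bound deriv f
  have hd1 : ∀ t ∈ Set.Ico (0:ℝ) b, HasDerivAt (deriv f) (g t) t := fun t ht =>
    ((hf1.differentiableOn (by norm_num)).differentiableAt
      (hSopen.mem_nhds (hIco t ht))).hasDerivAt
  have hd0 : ∀ t ∈ Set.Ico (0:ℝ) b, HasDerivAt f (deriv f t) t := fun t ht =>
    ((hfCD.differentiableOn (by norm_num)).differentiableAt
      (hSopen.mem_nhds (hIco t ht))).hasDerivAt
  have hAt : ∀ t : ℝ, HasDerivAt (fun τ : ℝ => A * τ) A t := fun t => by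
    simpa using (hasDerivAt_id t).const_mul A
  have hu1 : ∀ t ∈ Set.Ico (0:ℝ) b, deriv f t ≤ deriv f 0 + A * t := by
    have := decrease_lemma (v := fun t => deriv f t - A * t) (v' := fun t => g t - A)
      (fun t ht => (hd1 t ht).sub (hAt t))
      (fun t ht => by show g t - A ≤ 0; linarith [hgbound t ht])
    intro t ht
    have h : deriv f t - A * t ≤ deriv f 0 - A * 0 := this t ht
    linarith
  set B : ℝ := deriv f 0 + A * b with hBdef
  have hBt : ∀ t : ℝ, HasDerivAt (fun τ : ℝ => B * τ) B t := fun t => by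
    simpa using (hasDerivAt_id t).const_mul B
  have hu2 : ∀ t ∈ Set.Ico (0:ℝ) b, f t ≤ f 0 + B * t := by
    have := decrease_lemma (v := fun t => f t - B * t) (v' := fun t => deriv f t - B)
      (fun t ht => (hd0 t ht).sub (hBt t))
      (fun t ht => by
        have h1 := hu1 t ht
        have : A * t ≤ A * b := by
          apply mul_le_mul_of_nonneg_left ht.2.le hA0.le
        show deriv f t - B ≤ 0
        rw [hBdef]
        linarith)
    intro t ht
    have h : f t - B * t ≤ f 0 - B * 0 := this t ht
    linarith
  set C : ℝ := f 0 + |B| * b with hCdef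
  have hfleC : ∀ t ∈ Set.Ico (0:ℝ) b, f t ≤ C := by
    intro t ht
    have h1 := hu2 t ht
    have h2 : B * t ≤ |B| * b := by
      calc B * t ≤ |B| * t := mul_le_mul_of_nonneg_right (le_abs_self B) ht.1
        _ ≤ |B| * b := mul_le_mul_of_nonneg_left ht.2.le (abs_nonneg B)
    rw [hCdef]
    linarith
  -- barrier contradiction
  have htendin : Tendsto (fun t : ℝ => x + t • u) (𝓝[Set.Ioo (0:ℝ) b] b)
      (𝓝[interior K] (x + b • u)) := by
    apply tendsto_nhdsWithin_of_tendsto_nhds_of_eventually_within _ htendl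
    exact eventually_nhdsWithin_of_forall (fun t ht => hIco t ⟨ht.1.le, ht.2⟩)
  have htendf : Tendsto f (𝓝[Set.Ioo (0:ℝ) b] b) atTop :=
    (hbarrier _ hfront).comp htendin
  have hev : ∀ᶠ t in 𝓝[Set.Ioo (0:ℝ) b] b, C < f t ∧ t ∈ Set.Ioo (0:ℝ) b :=
    (htendf.eventually_gt_atTop C).and eventually_mem_nhdsWithin
  obtain ⟨t, htC, htmem⟩ := hev.exists
  exact absurd (hfleC t ⟨htmem.1.le, htmem.2⟩) (not_le.mpr htC)
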